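/- arXiv:1001.4747 — 3 statements merged into one kernel-verified Lean document; each statement's English description precedes it below -/
import Mathlib

section
/- For p > 1, the L² norm squared of the soliton Q_p equals ((p+1)/2)^{2/(p-1)} · Γ((p+1)/(p-1)) √π / Γ((p+3)/(2(p-1))), i.e., ∫_ℝ Q_p(x)² dx = ((p+1)/2)^{2/(p-1)} Γ((p+1)/(p-1)) √π / Γ((p+3)/(2(p-1))). -/
open MeasureTheory

noncomputable def sech (x : ℝ) : ℝ := 2 / (Real.exp x + Real.exp (-x))

noncomputable def Qp (p : ℝ) (x : ℝ) : ℝ :=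
  ((p + 1) / 2) ^ (1 / (p - 1)) * sech ((p - 1) * x / 2) ^ (2 / (p - 1))

lemma sech_pos (x : ℝ) : 0 < sech x := by
  unfold sech; positivity

/-- Real Beta function identity. -/
lemma real_beta {a b : ℝ} (ha : 0 < a) (hb : 0 < b) :
    Real.Gamma a * Real.Gamma b =
      Real.Gamma (a + b) * ∫ x in (0:ℝ)..1, x ^ (a - 1) * (1 - x) ^ (b - 1) := by
  have h := Complex.Gamma_mul_Gamma_eq_betaIntegral (s := (a : ℂ)) (t := (b : ℂ))
    (by simpa using ha) (by simpa using hb)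
  have hbeta : Complex.betaIntegral (a : ℂ) (b : ℂ) =
      ((∫ x in (0:ℝ)..1, x ^ (a - 1) * (1 - x) ^ (b - 1) : ℝ) : ℂ) := by
    rw [Complex.betaIntegral, ← intervalIntegral.integral_ofReal]
    refine intervalIntegral.integral_congr fun x hx => ?_
    rw [Set.uIcc_of_le (by norm_num : (0:ℝ) ≤ 1)] at hx
    push_cast [Complex.ofReal_cpow hx.1,
      Complex.ofReal_cpow (by linarith [hx.2] : (0:ℝ) ≤ 1 - x)]
    ring
  rw [hbeta, ← Complex.ofReal_add] at h
  rw [← Complex.ofReal_inj]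
  simpa [← Complex.ofReal_add, Complex.Gamma_ofReal] using h


lemma integral_sech_rpow {s : ℝ} (hs : 0 < s) :
    ∫ x : ℝ, sech x ^ s =
      Real.sqrt Real.pi * Real.Gamma (s / 2) / Real.Gamma (s / 2 + 1 / 2) := by
  set f : ℝ → ℝ := fun x => (1 + Real.exp (-2 * x))⁻¹ with hf
  set f' : ℝ → ℝ := fun x => 2 * Real.exp (-2 * x) / (1 + Real.exp (-2 * x)) ^ 2 with hf'
  have hEpos : ∀ x : ℝ, 0 < Real.exp (-2 * x) := fun x => Real.exp_pos _
  have hDpos : ∀ x : ℝ, 0 < 1 + Real.exp (-2 * x) := fun x => by positivity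
  have hderiv : ∀ x : ℝ, HasDerivAt f (f' x) x := by
    intro x
    have h1 : HasDerivAt (fun x : ℝ => 1 + Real.exp (-2 * x)) (-2 * Real.exp (-2 * x)) x := by
      have := ((hasDerivAt_id x).const_mul (-2 : ℝ)).exp
      simpa [mul_comm] using this.const_add 1
    have := h1.inv (hDpos x).ne'
    convert this using 1
    · rfl
    · rfl
    · rfl
    · simp only [hf']
      ring
  have hinj : Set.InjOn f Set.univ := by
    intro x _ y _ hxy
    have h1 : 1 + Real.exp (-2 * x) = 1 + Real.exp (-2 * y) := inv_inj.mp hxy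
    have h2 : (-2 : ℝ) * x = -2 * y :=
      Real.exp_injective (show Real.exp (-2 * x) = Real.exp (-2 * y) by linarith)
    linarith
  have himg : f '' Set.univ = Set.Ioo (0 : ℝ) 1 := by
    ext y
    simp only [Set.image_univ, Set.mem_range, Set.mem_Ioo]
    constructor
    · rintro ⟨x, rfl⟩
      refine ⟨by positivity, ?_⟩
      rw [hf]
      rw [inv_lt_one_iff₀]
      right; linarith [hEpos x]
    · rintro ⟨h0, h1⟩
      refine ⟨-(1/2) * Real.log (1 / y - 1), ?_⟩
      have ht : 0 < 1 / y - 1 := by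
        rw [sub_pos, lt_div_iff₀ h0]
        linarith
      rw [hf]
      simp only
      rw [show -2 * (-(1/2) * Real.log (1 / y - 1)) = Real.log (1 / y - 1) by ring,
        Real.exp_log ht]
      field_simp
      ring
  have key := integral_image_eq_integral_abs_deriv_smul MeasurableSet.univ
    (fun x _ => (hderiv x).hasDerivWithinAt) hinj
    (fun t => (t * (1 - t)) ^ (s / 2 - 1))
  rw [himg, setIntegral_univ] at key
  have hpt : ∀ x : ℝ, |f' x| • ((f x * (1 - f x)) ^ (s / 2 - 1)) =
      (2 : ℝ) ^ (1 - s) * sech x ^ s := by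
    intro x
    set E := Real.exp (-2 * x) with hE
    set D := 1 + E with hD
    have hE0 : 0 < E := hEpos x
    have hD0 : 0 < D := hDpos x
    have hfx : f x = D⁻¹ := rfl
    have h1f : 1 - f x = E / D := by
      rw [hfx]; field_simp; rw [hD]; ring
    have hprod : f x * (1 - f x) = E / D ^ 2 := by
      rw [hfx, h1f, inv_mul_eq_div, div_div, ← sq]
    have habs : |f' x| = 2 * E / D ^ 2 := by
      rw [hf']
      exact abs_of_pos (by positivity)
    set c := Real.exp (-x) / D with hc
    have hc0 : 0 < c := by positivity
    have hc2 : E / D ^ 2 = c ^ 2 := by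
      rw [hc, div_pow]
      congr 1
      rw [sq, ← Real.exp_add, hE]
      congr 1
      ring
    have hexp1 : Real.exp (-x) * Real.exp x = 1 := by
      rw [← Real.exp_add]; simp
    have hsum : Real.exp x + Real.exp (-x) = Real.exp x * D := by
      rw [hD, hE, mul_add, mul_one, ← Real.exp_add, show x + -2 * x = -x by ring]
    have hsech : sech x = 2 * c := by
      rw [sech, hsum, hc, mul_div_assoc']
      rw [div_eq_div_iff (by positivity) hD0.ne']
      linear_combination (-2 * D) * hexp1
    have hcs : (E / D ^ 2) ^ (s / 2) = c ^ s := by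
      rw [hc2, ← Real.rpow_natCast c 2, ← Real.rpow_mul hc0.le]
      congr 1
      push_cast
      ring
    have h21 : ((2 : ℝ) ^ (1 - s)) * ((2 : ℝ) ^ s) = 2 := by
      rw [← Real.rpow_add two_pos, show (1 - s) + s = 1 by ring, Real.rpow_one]
    calc |f' x| • ((f x * (1 - f x)) ^ (s / 2 - 1))
        = (2 * E / D ^ 2) * (E / D ^ 2) ^ (s / 2 - 1) := by
          rw [habs, hprod, smul_eq_mul]
      _ = 2 * ((E / D ^ 2) ^ (s / 2) / (E / D ^ 2) * (E / D ^ 2)) := by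
          rw [← Real.rpow_sub_one (by positivity : (E / D ^ 2) ≠ 0)]
          ring
      _ = 2 * (E / D ^ 2) ^ (s / 2) := by
          rw [div_mul_cancel₀ _ (by positivity : (E / D ^ 2) ≠ 0)]
      _ = 2 * c ^ s := by rw [hcs]
      _ = (2 : ℝ) ^ (1 - s) * sech x ^ s := by
          rw [hsech, Real.mul_rpow (by norm_num) hc0.le, ← mul_assoc, h21]
  simp_rw [hpt] at key
  rw [integral_const_mul] at key
  have hIoo : ∫ x in Set.Ioo (0:ℝ) 1, (x * (1 - x)) ^ (s / 2 - 1) =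
      ∫ x in (0:ℝ)..1, x ^ (s / 2 - 1) * (1 - x) ^ (s / 2 - 1) := by
    rw [intervalIntegral.integral_of_le (by norm_num : (0:ℝ) ≤ 1),
      ← MeasureTheory.integral_Ioc_eq_integral_Ioo]
    refine setIntegral_congr_fun measurableSet_Ioc fun x hx => ?_
    exact Real.mul_rpow hx.1.le (by linarith [hx.2])
  have hbeta := real_beta (half_pos hs) (half_pos hs)
  rw [show s / 2 + s / 2 = s by ring] at hbeta
  have hΓs : 0 < Real.Gamma s := Real.Gamma_pos_of_pos hs
  have hΓh : 0 < Real.Gamma (s / 2 + 1 / 2) := Real.Gamma_pos_of_pos (by linarith)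
  have hdup := Real.Gamma_mul_Gamma_add_half (s / 2)
  rw [show 2 * (s / 2) = s by ring] at hdup
  have h2 : (2:ℝ) ^ (1 - s) * (∫ x : ℝ, sech x ^ s) * Real.Gamma s =
      Real.Gamma (s / 2) * Real.Gamma (s / 2) := by
    rw [← key, hIoo]
    linarith [hbeta]
  rw [eq_div_iff hΓh.ne']
  apply mul_left_cancel₀
    (show (2:ℝ) ^ (1 - s) * Real.Gamma s ≠ 0 by positivity)
  linear_combination Real.Gamma (s / 2 + 1 / 2) * h2 + Real.Gamma (s / 2) * hdup

/-- The squared `L²` norm of the soliton `Q_p`. -/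
theorem soliton_L2_norm (p : ℝ) (hp : 1 < p) :
    ∫ x : ℝ, (Qp p x) ^ 2 =
      ((p + 1) / 2) ^ (2 / (p - 1)) * Real.Gamma ((p + 1) / (p - 1)) * Real.sqrt Real.pi /
        Real.Gamma ((p + 3) / (2 * (p - 1))) := by
  have hpm : (0:ℝ) < p - 1 := by linarith
  have hC : (0:ℝ) < (p + 1) / 2 := by linarith
  have hs : (0:ℝ) < 4 / (p - 1) := by positivity
  have hQ : ∀ x : ℝ, Qp p x ^ 2 =
      ((p + 1) / 2) ^ (2 / (p - 1)) * sech ((p - 1) / 2 * x) ^ (4 / (p - 1)) := by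
    intro x
    rw [Qp, mul_pow, sq, sq, ← Real.rpow_add hC, ← Real.rpow_add (sech_pos _),
      show 1 / (p - 1) + 1 / (p - 1) = 2 / (p - 1) by ring,
      show 2 / (p - 1) + 2 / (p - 1) = 4 / (p - 1) by ring,
      show (p - 1) * x / 2 = (p - 1) / 2 * x by ring]
  have hcomp := MeasureTheory.Measure.integral_comp_mul_left
    (fun y => sech y ^ (4 / (p - 1))) ((p - 1) / 2)
  have habs : |((p - 1) / 2)⁻¹| = 2 / (p - 1) := by
    rw [abs_of_pos (by positivity)]
    rw [inv_div]
  have hsech := integral_sech_rpow hs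
  rw [show (4 / (p - 1)) / 2 = 2 / (p - 1) by ring] at hsech
  have hΓh : 0 < Real.Gamma (2 / (p - 1) + 1 / 2) :=
    Real.Gamma_pos_of_pos (by positivity)
  have hΓadd : Real.Gamma ((p + 1) / (p - 1)) = 2 / (p - 1) * Real.Gamma (2 / (p - 1)) := by
    rw [show (p + 1) / (p - 1) = 2 / (p - 1) + 1 by field_simp; ring,
      Real.Gamma_add_one (by positivity)]
  have hhalf : (p + 3) / (2 * (p - 1)) = 2 / (p - 1) + 1 / 2 := by
    field_simp
    ring
  calc ∫ x : ℝ, Qp p x ^ 2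
      = ((p + 1) / 2) ^ (2 / (p - 1)) * ∫ x : ℝ, sech ((p - 1) / 2 * x) ^ (4 / (p - 1)) := by
        simp_rw [hQ]
        rw [integral_const_mul]
    _ = ((p + 1) / 2) ^ (2 / (p - 1)) * ((2 / (p - 1)) *
          (Real.sqrt Real.pi * Real.Gamma (2 / (p - 1)) / Real.Gamma (2 / (p - 1) + 1 / 2))) := by
        rw [hcomp, habs, smul_eq_mul, hsech]
    _ = ((p + 1) / 2) ^ (2 / (p - 1)) * Real.Gamma ((p + 1) / (p - 1)) * Real.sqrt Real.pi /
          Real.Gamma ((p + 3) / (2 * (p - 1))) := by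
        rw [hΓadd, hhalf]
        field_simp
end

section
/- Let Q(x) = (5/2)^{1/3} sech^{2/3}(3x/2) and L u = -u'' + u - 4Q³u. Then L(Q^{5/2}) = -(21/4) Q^{5/2}; that is, Q^{5/2} is an eigenfunction of L with eigenvalue -21/4. -/
/-- The quartic KdV soliton `Q(x) = (5/2)^{1/3} sech^{2/3}(3x/2)`. -/
noncomputable def Q (x : ℝ) : ℝ := ((5 : ℝ) / 2) ^ ((1 : ℝ) / 3) * sech (3 * x / 2) ^ ((2 : ℝ) / 3)

/-- The linearized operator `L u = -u'' + u - 4Q³u`. -/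
noncomputable def Lop (u : ℝ → ℝ) (x : ℝ) : ℝ :=
  -(deriv (deriv u) x) + u x - 4 * Q x ^ 3 * u x

lemma sech_eq (t : ℝ) : sech t = (Real.cosh t)⁻¹ := by
  have h : (0:ℝ) < Real.exp t + Real.exp (-t) := by positivity
  rw [sech, Real.cosh_eq]
  rw [eq_comm, inv_eq_iff_eq_inv, inv_div]

lemma cosh_ne (t : ℝ) : Real.cosh t ≠ 0 := (Real.cosh_pos t).ne'

lemma hasDerivAt_lin (y : ℝ) : HasDerivAt (fun t : ℝ => 3 * t / 2) (3 / 2) y := by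
  simpa using ((hasDerivAt_id y).const_mul 3).div_const 2

lemma hasDerivAt_cosh_lin (y : ℝ) :
    HasDerivAt (fun t : ℝ => Real.cosh (3 * t / 2)) (Real.sinh (3 * y / 2) * (3 / 2)) y :=
  by have := (Real.hasDerivAt_cosh (3 * y / 2)).comp y (hasDerivAt_lin y); exact this

lemma hasDerivAt_sinh_lin (y : ℝ) :
    HasDerivAt (fun t : ℝ => Real.sinh (3 * t / 2)) (Real.cosh (3 * y / 2) * (3 / 2)) y :=
  by have := (Real.hasDerivAt_sinh (3 * y / 2)).comp y (hasDerivAt_lin y); exact this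

lemma hasDerivAt_coshpow (p : ℝ) (y : ℝ) :
    HasDerivAt (fun t : ℝ => Real.cosh (3 * t / 2) ^ p)
      (Real.sinh (3 * y / 2) * (3 / 2) * p * Real.cosh (3 * y / 2) ^ (p - 1)) y :=
  (hasDerivAt_cosh_lin y).rpow_const (Or.inl (cosh_ne _))

lemma Q_pow (y : ℝ) :
    Q y ^ ((5 : ℝ) / 2)
      = ((5 : ℝ) / 2) ^ ((5 : ℝ) / 6) * Real.cosh (3 * y / 2) ^ (-(5 : ℝ) / 3) := by
  have hs : (0 : ℝ) ≤ sech (3 * y / 2) ^ ((2 : ℝ) / 3) :=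
    Real.rpow_nonneg (by rw [sech_eq]; positivity) _
  have hc : (0 : ℝ) < Real.cosh (3 * y / 2) := Real.cosh_pos _
  rw [Q, Real.mul_rpow (by positivity) hs,
    ← Real.rpow_mul (by norm_num : (0:ℝ) ≤ (5:ℝ)/2),
    ← Real.rpow_mul (by rw [sech_eq]; positivity),
    show (1:ℝ)/3 * (5/2) = 5/6 by norm_num,
    show (2:ℝ)/3 * (5/2) = 5/3 by norm_num,
    sech_eq, Real.inv_rpow hc.le, ← Real.rpow_neg hc.le]
  norm_num

lemma Q_cube (y : ℝ) :
    Q y ^ 3 = (5 : ℝ) / 2 * Real.cosh (3 * y / 2) ^ (-(2 : ℝ)) := by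
  have hc : (0 : ℝ) < Real.cosh (3 * y / 2) := Real.cosh_pos _
  have hs : (0 : ℝ) ≤ sech (3 * y / 2) := by rw [sech_eq]; positivity
  rw [Q, mul_pow, ← Real.rpow_natCast (((5:ℝ)/2) ^ ((1:ℝ)/3)) 3,
    ← Real.rpow_natCast ((sech (3 * y / 2)) ^ ((2:ℝ)/3)) 3,
    ← Real.rpow_mul (by norm_num : (0:ℝ) ≤ (5:ℝ)/2),
    ← Real.rpow_mul hs]
  norm_num
  rw [sech_eq, inv_pow]

lemma deriv_one_Q :
    deriv (fun y => Q y ^ ((5 : ℝ) / 2))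
      = fun y => ((5:ℝ)/2) ^ ((5:ℝ)/6) * (-(5:ℝ)/2)
          * (Real.sinh (3 * y / 2) * Real.cosh (3 * y / 2) ^ (-(8 : ℝ) / 3)) := by
  funext y
  have h : HasDerivAt (fun t => ((5:ℝ)/2) ^ ((5:ℝ)/6) * Real.cosh (3 * t / 2) ^ (-(5:ℝ)/3))
      (((5:ℝ)/2) ^ ((5:ℝ)/6) * (Real.sinh (3 * y / 2) * (3 / 2) * (-(5:ℝ)/3)
        * Real.cosh (3 * y / 2) ^ (-(5:ℝ)/3 - 1))) y :=
    (hasDerivAt_coshpow (-(5:ℝ)/3) y).const_mul _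
  have he : (fun y => Q y ^ ((5 : ℝ) / 2))
      = fun t => ((5:ℝ)/2) ^ ((5:ℝ)/6) * Real.cosh (3 * t / 2) ^ (-(5:ℝ)/3) := funext Q_pow
  rw [he, h.deriv, show -(5:ℝ)/3 - 1 = -(8:ℝ)/3 by norm_num]
  ring

/-- `Q^{5/2}` is an eigenfunction of `L` with eigenvalue `-21/4`. -/
theorem Lop_groundstate (x : ℝ) :
    Lop (fun y => Q y ^ ((5 : ℝ) / 2)) x = -(21 / 4) * Q x ^ ((5 : ℝ) / 2) := by
  have hc : (0 : ℝ) < Real.cosh (3 * x / 2) := Real.cosh_pos _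
  have h2 : HasDerivAt
      (fun y => ((5:ℝ)/2) ^ ((5:ℝ)/6) * (-(5:ℝ)/2)
          * (Real.sinh (3 * y / 2) * Real.cosh (3 * y / 2) ^ (-(8 : ℝ) / 3)))
      (((5:ℝ)/2) ^ ((5:ℝ)/6) * (-(5:ℝ)/2)
        * (Real.cosh (3 * x / 2) * (3 / 2) * Real.cosh (3 * x / 2) ^ (-(8 : ℝ) / 3)
        + Real.sinh (3 * x / 2) * (Real.sinh (3 * x / 2) * (3 / 2) * (-(8:ℝ)/3)
            * Real.cosh (3 * x / 2) ^ (-(8:ℝ)/3 - 1)))) x :=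
    ((hasDerivAt_sinh_lin x).mul (hasDerivAt_coshpow (-(8:ℝ)/3) x)).const_mul _
  rw [Lop, deriv_one_Q, h2.deriv]
  simp only [Q_pow, Q_cube]
  set c := Real.cosh (3 * x / 2)
  set s := Real.sinh (3 * x / 2)
  set K : ℝ := ((5:ℝ)/2) ^ ((5:ℝ)/6)
  have e1 : c * c ^ (-(8:ℝ)/3) = c ^ (-(5:ℝ)/3) := by
    nth_rewrite 1 [← Real.rpow_one c]
    rw [← Real.rpow_add hc]
    norm_num
  have e2 : s ^ 2 = c ^ 2 - 1 := by
    have h := Real.cosh_sq (3 * x / 2)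
    simp only [show c = Real.cosh (3 * x / 2) from rfl, show s = Real.sinh (3 * x / 2) from rfl]
    linarith
  have e3 : c ^ 2 * c ^ (-(8:ℝ)/3 - 1) = c ^ (-(5:ℝ)/3) := by
    rw [← Real.rpow_natCast c 2, ← Real.rpow_add hc]
    norm_num
  have e4 : c ^ (-(2:ℝ)) * c ^ (-(5:ℝ)/3) = c ^ (-(8:ℝ)/3 - 1) := by
    rw [← Real.rpow_add hc]
    norm_num
  linear_combination (15/4 : ℝ) * K * e1 + (-10 * K * c ^ (-(8:ℝ)/3 - 1)) * e2
    + (-10 * K) * e3 + (-10 * K) * e4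
end

section
/- For general p > 1, Q_p^{(p+1)/2} is an eigenfunction of the linearized operator L u = -u'' + u - p Q_p^{p-1} u with eigenvalue 1 - ((p+1)/2)²; that is, L(Q_p^{(p+1)/2}) = (1 - ((p+1)/2)²) Q_p^{(p+1)/2}. -/
/-- The linearized operator `L u = -u'' + u - p Q_p^{p-1} u`. -/
noncomputable def Lp (p : ℝ) (u : ℝ → ℝ) (x : ℝ) : ℝ :=
  -(deriv (deriv u) x) + u x - p * Qp p x ^ (p - 1) * u x

lemma sech_eq_inv_cosh (x : ℝ) : sech x = (Real.cosh x)⁻¹ := by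
  rw [sech, Real.cosh_eq, inv_div]

lemma cosh_rpow_hasDerivAt (k a x : ℝ) :
    HasDerivAt (fun y => Real.cosh (k * y) ^ a)
      (Real.sinh (k * x) * k * a * Real.cosh (k * x) ^ (a - 1)) x := by
  have h1 : HasDerivAt (fun y : ℝ => k * y) k x := by
    simpa using (hasDerivAt_id x).const_mul k
  have h2 : HasDerivAt (fun y => Real.cosh (k * y)) (Real.sinh (k * x) * k) x :=
    (Real.hasDerivAt_cosh (k * x)).comp x h1
  exact h2.rpow_const (Or.inl (Real.cosh_pos (x := k * x)).ne')

lemma sinh_comp_hasDerivAt (k x : ℝ) :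
    HasDerivAt (fun y => Real.sinh (k * y)) (Real.cosh (k * x) * k) x := by
  have h1 : HasDerivAt (fun y : ℝ => k * y) k x := by
    simpa using (hasDerivAt_id x).const_mul k
  exact (Real.hasDerivAt_sinh (k * x)).comp x h1

/-- first derivative of `C * cosh(ky)^a` -/
lemma g_hasDerivAt (C k a x : ℝ) :
    HasDerivAt (fun y => C * Real.cosh (k * y) ^ a)
      (C * (Real.sinh (k * x) * k * a * Real.cosh (k * x) ^ (a - 1))) x :=
  (cosh_rpow_hasDerivAt k a x).const_mul C

/-- derivative of the derivative function -/
lemma g1_hasDerivAt (C k a x : ℝ) :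
    HasDerivAt (fun y => C * (Real.sinh (k * y) * k * a * Real.cosh (k * y) ^ (a - 1)))
      (C * k * a * (Real.cosh (k * x) * k * Real.cosh (k * x) ^ (a - 1) +
        Real.sinh (k * x) * (Real.sinh (k * x) * k * (a - 1) * Real.cosh (k * x) ^ (a - 1 - 1)))) x := by
  have h1 : HasDerivAt (fun y => Real.sinh (k * y) * Real.cosh (k * y) ^ (a - 1))
      (Real.cosh (k * x) * k * Real.cosh (k * x) ^ (a - 1) +
        Real.sinh (k * x) * (Real.sinh (k * x) * k * (a - 1) * Real.cosh (k * x) ^ (a - 1 - 1))) x :=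
    (sinh_comp_hasDerivAt k x).mul (cosh_rpow_hasDerivAt k (a - 1) x)
  have h2 := (h1.const_mul (C * k * a))
  have e : (fun y => C * (Real.sinh (k * y) * k * a * Real.cosh (k * y) ^ (a - 1))) =
      fun y => C * k * a * (Real.sinh (k * y) * Real.cosh (k * y) ^ (a - 1)) := by
    funext y
    ring
  rw [e]
  exact h2

/-- `Q_p^{(p+1)/2}` is an eigenfunction of `L` with eigenvalue `1 - ((p+1)/2)²`. -/
theorem Lp_groundstate (p : ℝ) (hp : 1 < p) (x : ℝ) :
    Lp p (fun y => Qp p y ^ ((p + 1) / 2)) x =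
      (1 - ((p + 1) / 2) ^ 2) * Qp p x ^ ((p + 1) / 2) := by
  have hp1 : p - 1 ≠ 0 := by linarith
  set k : ℝ := (p - 1) / 2 with hk
  set a : ℝ := -((p + 1) / (p - 1)) with ha
  set C : ℝ := ((p + 1) / 2) ^ ((p + 1) / (2 * (p - 1))) with hC
  have hc : (0:ℝ) < (p + 1) / 2 := by linarith
  -- rewrite Qp in terms of cosh
  have hQ : ∀ y : ℝ, Qp p y = ((p + 1) / 2) ^ (1 / (p - 1)) *
      Real.cosh (k * y) ^ (-(2 / (p - 1))) := by
    intro y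
    rw [Qp, sech_eq_inv_cosh, Real.inv_rpow (Real.cosh_pos _).le,
      ← Real.rpow_neg (Real.cosh_pos _).le,
      show (p - 1) * y / 2 = k * y by rw [hk]; ring]
  -- the function u equals C * cosh(ky)^a
  have ex1 : 1 / (p - 1) * ((p + 1) / 2) = (p + 1) / (2 * (p - 1)) := by
    field_simp
  have ex2 : -(2 / (p - 1)) * ((p + 1) / 2) = a := by
    rw [ha]; field_simp
  have hu : (fun y => Qp p y ^ ((p + 1) / 2)) = fun y => C * Real.cosh (k * y) ^ a := by
    funext y
    rw [hQ y, Real.mul_rpow (Real.rpow_nonneg hc.le _) (Real.rpow_nonneg (Real.cosh_pos _).le _),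
      ← Real.rpow_mul hc.le, ← Real.rpow_mul (Real.cosh_pos _).le, ex1, ex2]
  have hux : Qp p x ^ ((p + 1) / 2) = C * Real.cosh (k * x) ^ a := congrFun hu x
  -- Qp ^ (p-1) = c * cosh^(-2)
  have ey1 : 1 / (p - 1) * (p - 1) = 1 := by field_simp
  have ey2 : -(2 / (p - 1)) * (p - 1) = (-2 : ℝ) := by field_simp
  have hQpow : Qp p x ^ (p - 1) = (p + 1) / 2 * Real.cosh (k * x) ^ (-2 : ℝ) := by
    rw [hQ x, Real.mul_rpow (Real.rpow_nonneg hc.le _) (Real.rpow_nonneg (Real.cosh_pos _).le _),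
      ← Real.rpow_mul hc.le, ← Real.rpow_mul (Real.cosh_pos _).le, ey1, ey2, Real.rpow_one]
  -- derivatives
  have hderiv1 : deriv (fun y => C * Real.cosh (k * y) ^ a) =
      fun y => C * (Real.sinh (k * y) * k * a * Real.cosh (k * y) ^ (a - 1)) := by
    funext y; exact (g_hasDerivAt C k a y).deriv
  have hderiv2 : deriv (deriv (fun y => C * Real.cosh (k * y) ^ a)) x =
      C * k * a * (Real.cosh (k * x) * k * Real.cosh (k * x) ^ (a - 1) +
        Real.sinh (k * x) * (Real.sinh (k * x) * k * (a - 1) * Real.cosh (k * x) ^ (a - 1 - 1))) := by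
    rw [hderiv1]; exact (g1_hasDerivAt C k a x).deriv
  rw [Lp, hu, hderiv2, hQpow, hux]
  -- abbreviations
  set h : ℝ := Real.cosh (k * x) with hh
  set S : ℝ := Real.sinh (k * x) with hS
  have hhpos : (0:ℝ) < h := Real.cosh_pos _
  have e3 : S ^ 2 = h ^ 2 - 1 := by
    have := Real.cosh_sq (k * x); rw [← hh, ← hS] at this; linarith
  have e1 : h ^ a = h ^ (a - 1 - 1) * h ^ 2 :=
    calc h ^ a = h ^ (a - 1 - 1 + 2) := by congr 1; ring
      _ = h ^ (a - 1 - 1) * h ^ (2:ℝ) := Real.rpow_add hhpos _ _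
      _ = h ^ (a - 1 - 1) * h ^ 2 := by
          rw [show (2:ℝ) = ((2:ℕ):ℝ) by norm_num, Real.rpow_natCast]
  have e2 : h ^ (a - 1) = h ^ (a - 1 - 1) * h :=
    calc h ^ (a - 1) = h ^ (a - 1 - 1 + 1) := by congr 1; ring
      _ = h ^ (a - 1 - 1) * h ^ (1:ℝ) := Real.rpow_add hhpos _ _
      _ = h ^ (a - 1 - 1) * h := by rw [Real.rpow_one]
  have e4 : h ^ (-2 : ℝ) = (h ^ 2)⁻¹ := by
    rw [show (-2 : ℝ) = -((2:ℕ):ℝ) by norm_num, Real.rpow_neg hhpos.le, Real.rpow_natCast]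
  rw [e1, e2, e4]
  set H : ℝ := h ^ (a - 1 - 1) with hH
  have hne : h ≠ 0 := hhpos.ne'
  rw [show S * (S * k * (a - 1) * H) = (h ^ 2 - 1) * (k * (a - 1) * H) by
    linear_combination (k * (a - 1) * H) * e3]
  rw [ha, hk]
  field_simp
  ring
end
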